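/- Let D be a strongly connected tournament, a a vertex, x ∈ a⁺ and y ∈ a⁻ with line(a,x) = line(y,a), and suppose line(x,y) belongs to Z = {line(a,z) : z ∈ a⁺} ∪ {line(z,a) : z ∈ a⁻}. Then a⁺ ∩ y⁻ = {x} and a⁻ ∩ x⁺ = {y}. -/

import Mathlib

open scoped Classical

/-- `stepsTo A n u v` : there is a directed walk of length `n` from `u` to `v`
in the digraph with arc relation `A`. -/
def stepsTo {V : Type*} (A : V → V → Prop) : ℕ → V → V → Prop
  | 0, u, v => u = v
  | n+1, u, v => ∃ w, A u w ∧ stepsTo A n w v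

/-- A digraph is strongly connected if every vertex is reachable from every vertex. -/
def StronglyConnected {V : Type*} (A : V → V → Prop) : Prop :=
  ∀ u v : V, ∃ n : ℕ, stepsTo A n u v

/-- The directed distance: the length of a shortest directed path from `u` to `v`. -/
noncomputable def ddist {V : Type*} (A : V → V → Prop) (u v : V) : ℕ :=
  sInf {n : ℕ | stepsTo A n u v}

/-- `btw A u v z` means `z ∈ [u,v]`, i.e. `z` lies on a shortest dipath from `u` to `v`. -/
def btw {V : Type*} (A : V → V → Prop) (u v z : V) : Prop :=
  ddist A u v = ddist A u z + ddist A z v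

/-- The line generated by the ordered pair `(u,v)`:
`{z : u ∈ [z,v] or v ∈ [u,z] or z ∈ [u,v]}`. -/
def line {V : Type*} (A : V → V → Prop) (u v : V) : Set V :=
  {z | btw A z v u ∨ btw A u z v ∨ btw A u v z}

/-- `L(D)`: the set of all lines generated by ordered pairs of distinct vertices. -/
def lineSet {V : Type*} (A : V → V → Prop) : Set (Set V) :=
  {S | ∃ u v : V, u ≠ v ∧ S = line A u v}

section helpers
variable {V : Type*} {A : V → V → Prop}

theorem ne_of_arc (hanti : ∀ u v : V, ¬ (A u v ∧ A v u)) {u v : V} (h : A u v) : u ≠ v := by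
  intro he; subst he; exact hanti u u ⟨h, h⟩

theorem stepsTo_one {u v : V} (h : A u v) : stepsTo A 1 u v := ⟨v, h, rfl⟩

theorem stepsTo_two {u w v : V} (h1 : A u w) (h2 : A w v) : stepsTo A 2 u v :=
  ⟨w, h1, stepsTo_one h2⟩

theorem stepsTo_trans : ∀ {m n : ℕ} {u v w : V},
    stepsTo A m u v → stepsTo A n v w → stepsTo A (m + n) u w := by
  intro m
  induction m with
  | zero =>
    intro n u v w h1 h2
    have h1' : u = v := h1
    subst h1'
    rw [Nat.zero_add]
    exact h2
  | succ m ih =>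
    intro n u v w h1 h2
    obtain ⟨t, ht, hst⟩ := h1
    rw [Nat.succ_add]
    exact ⟨t, ht, ih hst h2⟩

theorem ddist_spec (hsc : StronglyConnected A) (u v : V) : stepsTo A (ddist A u v) u v :=
  Nat.sInf_mem (hsc u v)

theorem ddist_le {n : ℕ} {u v : V} (h : stepsTo A n u v) : ddist A u v ≤ n :=
  Nat.sInf_le h

theorem ddist_self (u : V) : ddist A u u = 0 :=
  Nat.le_antisymm (ddist_le (show stepsTo A 0 u u from rfl)) (Nat.zero_le _)

theorem eq_of_ddist_eq_zero (hsc : StronglyConnected A) {u v : V} (h : ddist A u v = 0) :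
    u = v := by
  have hs := ddist_spec hsc u v
  rw [h] at hs
  exact hs

theorem ddist_triangle (hsc : StronglyConnected A) (u v w : V) :
    ddist A u w ≤ ddist A u v + ddist A v w :=
  ddist_le (stepsTo_trans (ddist_spec hsc u v) (ddist_spec hsc v w))

theorem arc_of_ddist_eq_one (hsc : StronglyConnected A) {u v : V} (h : ddist A u v = 1) :
    A u v := by
  have hs := ddist_spec hsc u v
  rw [h] at hs
  obtain ⟨w, hw, hwv⟩ := hs
  have h' : w = v := hwv
  subst h'
  exact hw

theorem ddist_eq_one (hsc : StronglyConnected A) {u v : V} (hne : u ≠ v) (h : A u v) :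
    ddist A u v = 1 := by
  have h1 : ddist A u v ≤ 1 := ddist_le (stepsTo_one h)
  have h0 : ddist A u v ≠ 0 := fun hz => hne (eq_of_ddist_eq_zero hsc hz)
  omega

theorem ddist_le_two {u w v : V} (h1 : A u w) (h2 : A w v) : ddist A u v ≤ 2 :=
  ddist_le (stepsTo_two h1 h2)

theorem ddist_eq_two (hsc : StronglyConnected A) {u v w : V} (hne : u ≠ v) (hnuv : ¬ A u v)
    (h1 : A u w) (h2 : A w v) : ddist A u v = 2 := by
  have ha := ddist_le_two h1 h2
  have h0 : ddist A u v ≠ 0 := fun hz => hne (eq_of_ddist_eq_zero hsc hz)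
  have h1' : ddist A u v ≠ 1 := fun hz => hnuv (arc_of_ddist_eq_one hsc hz)
  omega

theorem ddist_decomp (hsc : StronglyConnected A) {u v : V} {n : ℕ}
    (h : ddist A u v = n + 1) : ∃ w, A u w ∧ ddist A w v = n := by
  have hs := ddist_spec hsc u v
  rw [h] at hs
  obtain ⟨w, hw, hst⟩ := hs
  refine ⟨w, hw, ?_⟩
  have hle : ddist A w v ≤ n := ddist_le hst
  have hge : ddist A u v ≤ 1 + ddist A w v :=
    ddist_le (stepsTo_trans (stepsTo_one hw) (ddist_spec hsc w v))
  omega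

theorem mem_line {u v z : V} :
    z ∈ line A u v ↔ btw A z v u ∨ btw A u z v ∨ btw A u v z := Iff.rfl

theorem btw_iff_ddist {u v z : V} :
    btw A u v z ↔ ddist A u v = ddist A u z + ddist A z v := Iff.rfl

theorem mem_line_left (u v : V) : u ∈ line A u v :=
  mem_line.mpr (Or.inr (Or.inr (btw_iff_ddist.mpr (by rw [ddist_self]; omega))))

theorem mem_line_right (u v : V) : v ∈ line A u v :=
  mem_line.mpr (Or.inr (Or.inr (btw_iff_ddist.mpr (by rw [ddist_self]; omega))))

end helpers

section part2
variable {V : Type*} {A : V → V → Prop}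

theorem beats_lemma
    (hanti : ∀ u v : V, ¬ (A u v ∧ A v u)) (hcomp : ∀ u v : V, u ≠ v → A u v ∨ A v u)
    (hsc : StronglyConnected A) (a x y v : V) (k j : ℕ)
    (hdxy : ddist A x y = k) (hdya : ddist A y a = 1)
    (hline : line A x y = line A y a)
    (hva : A v a) (hj : 1 ≤ j) (hvy : ddist A v y = j) (hxv : ddist A x v + j = k) :
    ∀ s, A y s → A v s := by
  have hva1 : ddist A v a = 1 := ddist_eq_one hsc (ne_of_arc hanti hva) hva
  have hmem : v ∈ line A x y :=
    mem_line.mpr (Or.inr (Or.inr (btw_iff_ddist.mpr (by rw [hdxy, hvy]; omega))))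
  rw [hline] at hmem
  have hyv : ddist A y v = 1 + ddist A a v := by
    rcases mem_line.mp hmem with h | h | h
    · have e : ddist A v a = ddist A v y + ddist A y a := h
      rw [hva1, hvy, hdya] at e; omega
    · have e : ddist A y v = ddist A y a + ddist A a v := h
      rw [hdya] at e; exact e
    · have e : ddist A y a = ddist A y v + ddist A v a := h
      rw [hdya, hva1] at e
      have h0 : ddist A y v = 0 := by omega
      have h1 := eq_of_ddist_eq_zero hsc h0
      subst h1
      rw [ddist_self] at hvy; omega
  have hav2 : 2 ≤ ddist A a v := by
    have h0 : ddist A a v ≠ 0 := by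
      intro hz
      have h' := eq_of_ddist_eq_zero hsc hz
      subst h'
      exact hanti a a ⟨hva, hva⟩
    have h1 : ddist A a v ≠ 1 := fun hz => hanti a v ⟨arc_of_ddist_eq_one hsc hz, hva⟩
    omega
  intro s hys
  have hsv : s ≠ v := by
    intro h
    subst h
    have := ddist_eq_one hsc (ne_of_arc hanti hys) hys
    omega
  by_contra hns
  have hsv' : A s v := (hcomp v s (Ne.symm hsv)).resolve_left hns
  have : ddist A y v ≤ 2 := ddist_le_two hys hsv'
  omega

theorem claim2
    (hanti : ∀ u v : V, ¬ (A u v ∧ A v u)) (hcomp : ∀ u v : V, u ≠ v → A u v ∨ A v u)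
    (hsc : StronglyConnected A) (a x y : V) (k : ℕ)
    (hy : A y a) (hdxy : ddist A x y = k) (hdya : ddist A y a = 1)
    (hyA : ∀ s, A a s → A y s)
    (hline : line A x y = line A y a) :
    ∀ j, 1 ≤ j → ∀ v, ddist A v y = j → ddist A x v + j = k →
      A v a ∧ ∀ s, A y s → A v s := by
  have noloop : ∀ u : V, ¬ A u u := fun u h => hanti u u ⟨h, h⟩
  intro j hj
  induction j, hj using Nat.le_induction with
  | base =>
    intro v hvy hxv
    have hvy' : A v y := arc_of_ddist_eq_one hsc hvy
    have hva : A v a := by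
      rcases eq_or_ne v a with rfl | hne
      · exact (hanti y v ⟨hy, hvy'⟩).elim
      · by_cases hav : A a v
        · exact (hanti v y ⟨hvy', hyA v hav⟩).elim
        · exact (hcomp v a hne).resolve_right hav
    exact ⟨hva, beats_lemma hanti hcomp hsc a x y v k 1 hdxy hdya hline hva le_rfl hvy hxv⟩
  | succ j hj ih =>
    intro v hvy hxv
    obtain ⟨t, hvt, hty⟩ := ddist_decomp hsc hvy
    have hvt1 : ddist A v t = 1 := ddist_eq_one hsc (ne_of_arc hanti hvt) hvt
    have hxt : ddist A x t + j = k := by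
      have h1 : ddist A x t ≤ ddist A x v + ddist A v t := ddist_triangle hsc x v t
      have h2 : ddist A x y ≤ ddist A x t + ddist A t y := ddist_triangle hsc x t y
      rw [hdxy, hty] at h2
      omega
    obtain ⟨hta, htb⟩ := ih t hty hxt
    have hva : A v a := by
      rcases eq_or_ne v a with rfl | hne
      · exact (noloop t (htb t (hyA t hvt))).elim
      · by_cases hav : A a v
        · exact (hanti v t ⟨hvt, htb v (hyA v hav)⟩).elim
        · exact (hcomp v a hne).resolve_right hav
    exact ⟨hva, beats_lemma hanti hcomp hsc a x y v k (j+1) hdxy hdya hline hva (by omega) hvy hxv⟩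

end part2

section part3
variable {V : Type*} {A : V → V → Prop}

theorem caseII
    (hanti : ∀ u v : V, ¬ (A u v ∧ A v u)) (hcomp : ∀ u v : V, u ≠ v → A u v ∨ A v u)
    (hsc : StronglyConnected A)
    (a x y : V) (hx : A a x) (hy : A y a) (hyx : A y x)
    (hrep : line A a x = line A y a)
    (hZ : (∃ z, A a z ∧ line A x y = line A a z) ∨ (∃ z, A z a ∧ line A x y = line A z a)) :
    False := by
  have hax : a ≠ x := ne_of_arc hanti hx
  have hninv : ¬ A x y := fun h => hanti y x ⟨hyx, h⟩
  have hxyne : x ≠ y := (ne_of_arc hanti hyx).symm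
  have hk2 : 2 ≤ ddist A x y := by
    have h0 : ddist A x y ≠ 0 := fun h => hxyne (eq_of_ddist_eq_zero hsc h)
    have h1 : ddist A x y ≠ 1 := fun h => hninv (arc_of_ddist_eq_one hsc h)
    omega
  have d_ax : ddist A a x = 1 := ddist_eq_one hsc hax hx
  have d_ya : ddist A y a = 1 := ddist_eq_one hsc (ne_of_arc hanti hy) hy
  have d_yx : ddist A y x = 1 := ddist_eq_one hsc (ne_of_arc hanti hyx) hyx
  have hxL : x ∈ line A y a := by rw [← hrep]; exact mem_line_right a x
  have d_xa : ddist A x a = ddist A x y + 1 := by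
    rcases mem_line.mp hxL with h | h | h
    · have e : ddist A x a = ddist A x y + ddist A y a := h
      rw [d_ya] at e; exact e
    · have e : ddist A y x = ddist A y a + ddist A a x := h
      rw [d_yx, d_ya, d_ax] at e; omega
    · have e : ddist A y a = ddist A y x + ddist A x a := h
      rw [d_ya, d_yx] at e
      have h0 : ddist A x a = 0 := by omega
      exact absurd (eq_of_ddist_eq_zero hsc h0) (Ne.symm hax)
  have hyL : y ∈ line A a x := by rw [hrep]; exact mem_line_left y a
  have d_ay : ddist A a y = 1 + ddist A x y := by
    rcases mem_line.mp hyL with h | h | h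
    · have e : ddist A y x = ddist A y a + ddist A a x := h
      rw [d_yx, d_ya, d_ax] at e; omega
    · have e : ddist A a y = ddist A a x + ddist A x y := h
      rw [d_ax] at e; exact e
    · have e : ddist A a x = ddist A a y + ddist A y x := h
      rw [d_ax, d_yx] at e
      have h0 : ddist A a y = 0 := by omega
      exact absurd (eq_of_ddist_eq_zero hsc h0) (Ne.symm (ne_of_arc hanti hy))
  have hyA : ∀ s, A a s → A y s := by
    intro s has
    have hsy : s ≠ y := by
      intro h; rw [h] at has; exact hanti a y ⟨has, hy⟩
    by_contra hnys
    have hsy' : A s y := (hcomp s y hsy).resolve_right hnys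
    have hle : ddist A a y ≤ 2 := ddist_le_two has hsy'
    omega
  have hxA : ∀ t, A x t → A a t := by
    intro t hxt
    rcases eq_or_ne t a with h | hta
    · rw [h] at hxt
      have : ddist A x a ≤ 1 := ddist_le (stepsTo_one hxt)
      omega
    · by_contra hnat
      have h' : A t a := (hcomp t a hta).resolve_right hnat
      have : ddist A x a ≤ 2 := ddist_le_two hxt h'
      omega
  have hline : line A x y = line A y a := by
    rcases hZ with ⟨w, haw, heq⟩ | ⟨w, hwa, heq⟩
    · rcases eq_or_ne w x with rfl | hwx
      · rw [heq, hrep]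
      · exfalso
        have hyw : A y w := hyA w haw
        have d_yw : ddist A y w = 1 := ddist_eq_one hsc (ne_of_arc hanti hyw) hyw
        have d_aw : ddist A a w = 1 := ddist_eq_one hsc (ne_of_arc hanti haw) haw
        have hymem : y ∈ line A a w := by rw [← heq]; exact mem_line_right x y
        have d_wy : ddist A w y = ddist A x y := by
          rcases mem_line.mp hymem with h | h | h
          · have e : ddist A y w = ddist A y a + ddist A a w := h
            rw [d_yw, d_ya, d_aw] at e; omega
          · have e : ddist A a y = ddist A a w + ddist A w y := h
            rw [d_ay, d_aw] at e; omega
          · have e : ddist A a w = ddist A a y + ddist A y w := h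
            rw [d_aw, d_ay, d_yw] at e; omega
        have hwmem : w ∈ line A x y := by rw [heq]; exact mem_line_right a w
        have d_xw : ddist A x w = ddist A x y + 1 := by
          rcases mem_line.mp hwmem with h | h | h
          · have e : ddist A w y = ddist A w x + ddist A x y := h
            rw [d_wy] at e
            have h0 : ddist A w x = 0 := by omega
            exact absurd (eq_of_ddist_eq_zero hsc h0) hwx
          · have e : ddist A x w = ddist A x y + ddist A y w := h
            rw [d_yw] at e; exact e
          · have e : ddist A x y = ddist A x w + ddist A w y := h
            rw [d_wy] at e
            have h0 : ddist A x w = 0 := by omega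
            exact absurd (eq_of_ddist_eq_zero hsc h0) (Ne.symm hwx)
        have hxmem : x ∈ line A a w := by rw [← heq]; exact mem_line_left x y
        rcases mem_line.mp hxmem with h | h | h
        · have e : ddist A x w = ddist A x a + ddist A a w := h
          rw [d_xw, d_xa, d_aw] at e; omega
        · have e : ddist A a x = ddist A a w + ddist A w x := h
          rw [d_ax, d_aw] at e
          exact hwx (eq_of_ddist_eq_zero hsc (by omega))
        · have e : ddist A a w = ddist A a x + ddist A x w := h
          rw [d_aw, d_ax, d_xw] at e; omega
    · rcases eq_or_ne w y with rfl | hwy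
      · rw [heq]
      · exfalso
        have hnxw : ¬ A x w := by
          intro hxw
          have : ddist A x a ≤ 2 := ddist_le_two hxw hwa
          omega
        have hwx' : w ≠ x := by
          intro h; rw [h] at hwa; exact hanti a x ⟨hx, hwa⟩
        have hwx : A w x := (hcomp w x hwx').resolve_right hnxw
        have d_wa : ddist A w a = 1 := ddist_eq_one hsc (ne_of_arc hanti hwa) hwa
        have d_wx : ddist A w x = 1 := ddist_eq_one hsc hwx' hwx
        have hxmem : x ∈ line A w a := by rw [← heq]; exact mem_line_left x y
        have d_xw : ddist A x w = ddist A x y := by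
          rcases mem_line.mp hxmem with h | h | h
          · have e : ddist A x a = ddist A x w + ddist A w a := h
            rw [d_xa, d_wa] at e; omega
          · have e : ddist A w x = ddist A w a + ddist A a x := h
            rw [d_wx, d_wa, d_ax] at e; omega
          · have e : ddist A w a = ddist A w x + ddist A x a := h
            rw [d_wa, d_wx, d_xa] at e; omega
        have hwmem : w ∈ line A x y := by rw [heq]; exact mem_line_left w a
        have d_wy : ddist A w y = ddist A x y + 1 := by
          rcases mem_line.mp hwmem with h | h | h
          · have e : ddist A w y = ddist A w x + ddist A x y := h
            rw [d_wx] at e; omega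
          · have e : ddist A x w = ddist A x y + ddist A y w := h
            rw [d_xw] at e
            have h0 : ddist A y w = 0 := by omega
            exact absurd (eq_of_ddist_eq_zero hsc h0) (Ne.symm hwy)
          · have e : ddist A x y = ddist A x w + ddist A w y := h
            rw [d_xw] at e
            have h0 : ddist A w y = 0 := by omega
            exact absurd (eq_of_ddist_eq_zero hsc h0) hwy
        have hymem : y ∈ line A w a := by rw [← heq]; exact mem_line_right x y
        rcases mem_line.mp hymem with h | h | h
        · have e : ddist A y a = ddist A y w + ddist A w a := h
          rw [d_ya, d_wa] at e
          exact hwy (eq_of_ddist_eq_zero hsc (by omega)).symm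
        · have e : ddist A w y = ddist A w a + ddist A a y := h
          rw [d_wy, d_wa, d_ay] at e; omega
        · have e : ddist A w a = ddist A w y + ddist A y a := h
          rw [d_wa, d_wy, d_ya] at e; omega
  obtain ⟨u1, hxu1, hu1y⟩ := ddist_decomp hsc
    (show ddist A x y = (ddist A x y - 1) + 1 by omega)
  have hd_xu1 : ddist A x u1 = 1 := ddist_eq_one hsc (ne_of_arc hanti hxu1) hxu1
  have hu1a := (claim2 hanti hcomp hsc a x y (ddist A x y) hy rfl d_ya hyA hline
    (ddist A x y - 1) (by omega) u1 hu1y (by omega)).1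
  exact hanti a u1 ⟨hxA u1 hxu1, hu1a⟩

end part3

theorem stmt12 {V : Type*} [Fintype V] (A : V → V → Prop)
    (hanti : ∀ u v : V, ¬ (A u v ∧ A v u))
    (hcomp : ∀ u v : V, u ≠ v → A u v ∨ A v u)
    (hsc : StronglyConnected A)
    (a x y : V) (hx : A a x) (hy : A y a) (hrep : line A a x = line A y a)
    (hZ : line A x y ∈ ({S | (∃ z : V, A a z ∧ S = line A a z) ∨
               (∃ z : V, A z a ∧ S = line A z a)} : Set (Set V))) :
    {z : V | A a z ∧ A z y} = {x} ∧ {z : V | A z a ∧ A x z} = {y} := by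
  have hZ' : (∃ z, A a z ∧ line A x y = line A a z) ∨
      (∃ z, A z a ∧ line A x y = line A z a) := hZ
  have hxy : A x y := by
    by_contra hnxy
    have hxyne : x ≠ y := by
      intro h; rw [h] at hx; exact hanti a y ⟨hx, hy⟩
    have hyx : A y x := (hcomp x y hxyne).resolve_left hnxy
    exact caseII hanti hcomp hsc a x y hx hy hyx hrep hZ'
  have hax : a ≠ x := ne_of_arc hanti hx
  have hya : y ≠ a := ne_of_arc hanti hy
  have hxyne : x ≠ y := ne_of_arc hanti hxy
  have hnxa : ¬ A x a := fun h => hanti a x ⟨hx, h⟩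
  have hnay : ¬ A a y := fun h => hanti a y ⟨h, hy⟩
  have hnyx : ¬ A y x := fun h => hanti x y ⟨hxy, h⟩
  have d_ax : ddist A a x = 1 := ddist_eq_one hsc hax hx
  have d_xy : ddist A x y = 1 := ddist_eq_one hsc hxyne hxy
  have d_ya : ddist A y a = 1 := ddist_eq_one hsc hya hy
  have d_xa : ddist A x a = 2 := ddist_eq_two hsc (Ne.symm hax) hnxa hxy hy
  have d_ay : ddist A a y = 2 := ddist_eq_two hsc (Ne.symm hya) hnay hx hxy
  have d_yx : ddist A y x = 2 := ddist_eq_two hsc (Ne.symm hxyne) hnyx hy hx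
  -- L1 : out-neighbours of a dominating y, other than x
  have L1 : ∀ z, A a z → A z y → z ≠ x →
      (A x z ∧ z ∈ line A y a ∧ z ∉ line A x y) := by
    intro z haz hzy hzx
    have hza' : z ≠ a := (ne_of_arc hanti haz).symm
    have hzy' : z ≠ y := ne_of_arc hanti hzy
    have hnza : ¬ A z a := fun h => hanti a z ⟨haz, h⟩
    have d_za : ddist A z a = 2 := ddist_eq_two hsc hza' hnza hzy hy
    have d_zy : ddist A z y = 1 := ddist_eq_one hsc hzy' hzy
    have d_az : ddist A a z = 1 := ddist_eq_one hsc (ne_of_arc hanti haz) haz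
    have hzL : z ∈ line A y a :=
      mem_line.mpr (Or.inl (btw_iff_ddist.mpr (by rw [d_za, d_zy, d_ya])))
    have hzL' : z ∈ line A a x := by rw [hrep]; exact hzL
    have d_zx : ddist A z x = 3 := by
      rcases mem_line.mp hzL' with h | h | h
      · have e : ddist A z x = ddist A z a + ddist A a x := h
        rw [d_za, d_ax] at e; omega
      · have e : ddist A a z = ddist A a x + ddist A x z := h
        rw [d_az, d_ax] at e
        have h0 : ddist A x z = 0 := by omega
        exact absurd (eq_of_ddist_eq_zero hsc h0) (Ne.symm hzx)
      · have e : ddist A a x = ddist A a z + ddist A z x := h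
        rw [d_ax, d_az] at e
        have h0 : ddist A z x = 0 := by omega
        exact absurd (eq_of_ddist_eq_zero hsc h0) hzx
    have hnzx : ¬ A z x := by
      intro h
      have := ddist_eq_one hsc hzx h
      omega
    have hxz : A x z := (hcomp z x hzx).resolve_left hnzx
    have d_xz : ddist A x z = 1 := ddist_eq_one hsc (ne_of_arc hanti hxz) hxz
    refine ⟨hxz, hzL, ?_⟩
    intro hmem
    rcases mem_line.mp hmem with h | h | h
    · have e : ddist A z y = ddist A z x + ddist A x y := h
      rw [d_zy, d_zx, d_xy] at e; omega
    · have e : ddist A x z = ddist A x y + ddist A y z := h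
      rw [d_xz, d_xy] at e
      have h0 : ddist A y z = 0 := by omega
      exact hzy' (eq_of_ddist_eq_zero hsc h0).symm
    · have e : ddist A x y = ddist A x z + ddist A z y := h
      rw [d_xy, d_xz, d_zy] at e; omega
  -- L2 : in-neighbours of a dominated by x, other than y
  have L2 : ∀ z, A z a → A x z → z ≠ y →
      (A z y ∧ z ∈ line A y a ∧ z ∉ line A x y) := by
    intro z hza hxz hzy
    have hza1 : ddist A z a = 1 := ddist_eq_one hsc (ne_of_arc hanti hza) hza
    have hxz1 : ddist A x z = 1 := ddist_eq_one hsc (ne_of_arc hanti hxz) hxz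
    have hzx' : z ≠ x := (ne_of_arc hanti hxz).symm
    have hnaz : ¬ A a z := fun h => hanti a z ⟨h, hza⟩
    have d_az' : ddist A a z = 2 :=
      ddist_eq_two hsc (Ne.symm (ne_of_arc hanti hza)) hnaz hx hxz
    have hzLax : z ∈ line A a x :=
      mem_line.mpr (Or.inr (Or.inl (btw_iff_ddist.mpr (by rw [d_az', d_ax, hxz1]))))
    have hzL : z ∈ line A y a := by rw [← hrep]; exact hzLax
    have d_yz : ddist A y z = 3 := by
      rcases mem_line.mp hzL with h | h | h
      · have e : ddist A z a = ddist A z y + ddist A y a := h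
        rw [hza1, d_ya] at e
        have h0 : ddist A z y = 0 := by omega
        exact absurd (eq_of_ddist_eq_zero hsc h0) hzy
      · have e : ddist A y z = ddist A y a + ddist A a z := h
        rw [d_ya, d_az'] at e; omega
      · have e : ddist A y a = ddist A y z + ddist A z a := h
        rw [d_ya, hza1] at e
        have h0 : ddist A y z = 0 := by omega
        exact absurd (eq_of_ddist_eq_zero hsc h0) (Ne.symm hzy)
    have hnyz : ¬ A y z := by
      intro h
      have := ddist_eq_one hsc (Ne.symm hzy) h
      omega
    have hzy2 : A z y := (hcomp z y hzy).resolve_right hnyz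
    have d_zy : ddist A z y = 1 := ddist_eq_one hsc hzy hzy2
    refine ⟨hzy2, hzL, ?_⟩
    intro hmem
    rcases mem_line.mp hmem with h | h | h
    · have e : ddist A z y = ddist A z x + ddist A x y := h
      rw [d_zy, d_xy] at e
      have h0 : ddist A z x = 0 := by omega
      exact absurd (eq_of_ddist_eq_zero hsc h0) hzx'
    · have e : ddist A x z = ddist A x y + ddist A y z := h
      rw [hxz1, d_xy, d_yz] at e; omega
    · have e : ddist A x y = ddist A x z + ddist A z y := h
      rw [d_xy, hxz1, d_zy] at e; omega
  -- the line xy coincides with the line ya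
  have hline : line A x y = line A y a := by
    rcases hZ' with ⟨w, haw, heq⟩ | ⟨w, hwa, heq⟩
    · rcases eq_or_ne w x with h | hwx
      · rw [h] at heq; rw [heq, hrep]
      · exfalso
        have hwy : w ≠ y := by
          intro h; rw [h] at haw; exact hanti a y ⟨haw, hy⟩
        have d_aw : ddist A a w = 1 := ddist_eq_one hsc (ne_of_arc hanti haw) haw
        have hymem : y ∈ line A a w := by rw [← heq]; exact mem_line_right x y
        have hwy' : A w y := by
          rcases mem_line.mp hymem with h | h | h
          · have e : ddist A y w = ddist A y a + ddist A a w := h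
            rw [d_ya, d_aw] at e
            have hny : ¬ A y w := by
              intro hyw
              have := ddist_eq_one hsc (ne_of_arc hanti hyw) hyw
              omega
            exact (hcomp w y hwy).resolve_right hny
          · have e : ddist A a y = ddist A a w + ddist A w y := h
            rw [d_ay, d_aw] at e
            exact arc_of_ddist_eq_one hsc (by omega)
          · have e : ddist A a w = ddist A a y + ddist A y w := h
            rw [d_aw, d_ay] at e
            exact absurd e (by omega)
        obtain ⟨hxw, -, -⟩ := L1 w haw hwy' hwx
        have d_xw : ddist A x w = 1 := ddist_eq_one hsc (ne_of_arc hanti hxw) hxw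
        have hxmem : x ∈ line A a w := by rw [← heq]; exact mem_line_left x y
        rcases mem_line.mp hxmem with h | h | h
        · have e : ddist A x w = ddist A x a + ddist A a w := h
          rw [d_xw, d_xa, d_aw] at e; omega
        · have e : ddist A a x = ddist A a w + ddist A w x := h
          rw [d_ax, d_aw] at e
          exact hwx (eq_of_ddist_eq_zero hsc (by omega))
        · have e : ddist A a w = ddist A a x + ddist A x w := h
          rw [d_aw, d_ax, d_xw] at e; omega
    · rcases eq_or_ne w y with h | hwy
      · rw [h] at heq; rw [heq]
      · exfalso
        have hwx : w ≠ x := by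
          intro h; rw [h] at hwa; exact hanti a x ⟨hx, hwa⟩
        have d_wa : ddist A w a = 1 := ddist_eq_one hsc (ne_of_arc hanti hwa) hwa
        have hxmem : x ∈ line A w a := by rw [← heq]; exact mem_line_left x y
        have hxw : A x w := by
          rcases mem_line.mp hxmem with h | h | h
          · have e : ddist A x a = ddist A x w + ddist A w a := h
            rw [d_xa, d_wa] at e
            exact arc_of_ddist_eq_one hsc (by omega)
          · have e : ddist A w x = ddist A w a + ddist A a x := h
            rw [d_wa, d_ax] at e
            have hn : ¬ A w x := by
              intro hh
              have := ddist_eq_one hsc hwx hh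
              omega
            exact (hcomp x w (Ne.symm hwx)).resolve_right hn
          · have e : ddist A w a = ddist A w x + ddist A x a := h
            rw [d_wa, d_xa] at e
            exact absurd e (by omega)
        obtain ⟨hwy', -, -⟩ := L2 w hwa hxw hwy
        have d_wy : ddist A w y = 1 := ddist_eq_one hsc (ne_of_arc hanti hwy') hwy'
        have hymem : y ∈ line A w a := by rw [← heq]; exact mem_line_right x y
        rcases mem_line.mp hymem with h | h | h
        · have e : ddist A y a = ddist A y w + ddist A w a := h
          rw [d_ya, d_wa] at e
          exact hwy (eq_of_ddist_eq_zero hsc (by omega)).symm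
        · have e : ddist A w y = ddist A w a + ddist A a y := h
          rw [d_wy, d_wa, d_ay] at e; omega
        · have e : ddist A w a = ddist A w y + ddist A y a := h
          rw [d_wa, d_wy, d_ya] at e; omega
  constructor
  · apply Set.eq_singleton_iff_unique_mem.mpr
    refine ⟨⟨hx, hxy⟩, ?_⟩
    rintro z ⟨haz, hzy⟩
    by_contra hzx
    obtain ⟨-, hzL, hznot⟩ := L1 z haz hzy hzx
    rw [← hline] at hzL
    exact hznot hzL
  · apply Set.eq_singleton_iff_unique_mem.mpr
    refine ⟨⟨hy, hxy⟩, ?_⟩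
    rintro z ⟨hza, hxz⟩
    by_contra hzy
    obtain ⟨-, hzL, hznot⟩ := L2 z hza hxz hzy
    rw [← hline] at hzL
    exact hznot hzL
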